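/- Let 1 < p < ∞ and q with 1/p + 1/q = 1, let N ≥ 1, 𝒩 = {1,...,N}, and let (y^n) be a sequence in ℝ^𝒩 with ‖y^n‖_p → ∞ as n → ∞. Then there exist μ ∈ ℝ^𝒩 with ‖μ‖_q = 1 and a subsequence (y^{n_k}) such that for every x ∈ ℝ^𝒩, the values ‖x − y^{n_k}‖_p − ‖y^{n_k}‖_p converge as k → ∞ to h_μ(x) = −Σ_{i∈𝒩} μ_i x_i. -/

import Mathlib

open Filter Topology

lemma aux_hasDerivAt {p : ℝ} (hp : 1 < p) (t : ℝ) :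
    HasDerivAt (fun s : ℝ => |s| ^ p) (p * Real.sign t * |t| ^ (p-1)) t := by
  rcases lt_trichotomy t 0 with ht | ht | ht
  · have h1 : HasDerivAt (fun s : ℝ => (-s) ^ p) (p * (-t) ^ (p-1) * (-1)) t :=
      (Real.hasDerivAt_rpow_const (p := p) (Or.inl (by linarith))).comp t (hasDerivAt_neg t)
    have h2 : (fun s : ℝ => |s| ^ p) =ᶠ[𝓝 t] fun s : ℝ => (-s) ^ p := by
      filter_upwards [eventually_lt_nhds ht] with s hs
      rw [abs_of_neg hs]
    have := h1.congr_of_eventuallyEq h2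
    refine this.congr_deriv ?_
    rw [Real.sign_of_neg ht, abs_of_neg ht]; ring
  · subst ht
    simp only [Real.sign_zero, mul_zero, zero_mul]
    rw [hasDerivAt_iff_tendsto_slope]
    apply squeeze_zero_norm' (a := fun s : ℝ => |s| ^ (p-1))
    · filter_upwards [self_mem_nhdsWithin] with s hs
      have hs0 : s ≠ 0 := hs
      have habs : (0:ℝ) < |s| := abs_pos.2 hs0
      have : slope (fun s : ℝ => |s| ^ p) 0 s = |s| ^ p / s := by
        simp [slope_def_field, Real.zero_rpow (by linarith : p ≠ 0)]
      rw [Real.norm_eq_abs, this, abs_div, abs_of_nonneg (Real.rpow_nonneg (abs_nonneg s) p)]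
      rw [div_le_iff₀ habs, ← Real.rpow_add_one (ne_of_gt habs), sub_add_cancel]
    · have hc : ContinuousAt (fun s : ℝ => |s| ^ (p-1)) 0 :=
        Continuous.continuousAt (by
          rw [continuous_iff_continuousAt]
          intro a
          exact ContinuousAt.rpow_const continuous_abs.continuousAt (Or.inr (by linarith)))
      have h0 : |(0:ℝ)| ^ (p-1) = 0 := by
        simp [Real.zero_rpow (by linarith : p - 1 ≠ 0)]
      have := hc.continuousWithinAt (s := {(0:ℝ)}ᶜ)
      unfold ContinuousWithinAt at this
      simpa only [h0] using this
  · have h1 : HasDerivAt (fun s : ℝ => s ^ p) (p * t ^ (p-1)) t :=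
      Real.hasDerivAt_rpow_const (Or.inl (by linarith))
    have h2 : (fun s : ℝ => |s| ^ p) =ᶠ[𝓝 t] fun s : ℝ => s ^ p := by
      filter_upwards [eventually_gt_nhds ht] with s hs
      rw [abs_of_pos hs]
    have := h1.congr_of_eventuallyEq h2
    refine this.congr_deriv ?_
    rw [Real.sign_of_pos ht, abs_of_pos ht]; ring

lemma aux_cont {p : ℝ} (hp : 1 < p) :
    Continuous (fun t : ℝ => p * Real.sign t * |t| ^ (p-1)) := by
  rw [continuous_iff_continuousAt]
  intro t
  rcases lt_trichotomy t 0 with ht | ht | ht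
  · have h2 : (fun s : ℝ => p * Real.sign s * |s| ^ (p-1)) =ᶠ[𝓝 t]
        fun s : ℝ => p * (-1) * |s| ^ (p-1) := by
      filter_upwards [eventually_lt_nhds ht] with s hs
      rw [Real.sign_of_neg hs]
    refine ContinuousAt.congr ?_ h2.symm
    exact (continuousAt_const.mul continuousAt_const).mul
      (continuous_abs.continuousAt.rpow_const (Or.inr (by linarith)))
  · subst ht
    have h0 : (fun t : ℝ => p * Real.sign t * |t| ^ (p-1)) 0 = 0 := by simp
    unfold ContinuousAt
    rw [h0]
    apply squeeze_zero_norm' (a := fun s : ℝ => |p| * |s| ^ (p-1))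
    · filter_upwards with s
      rw [Real.norm_eq_abs, abs_mul, abs_mul,
        abs_of_nonneg (Real.rpow_nonneg (abs_nonneg s) _)]
      have : |Real.sign s| ≤ 1 := by
        rcases lt_trichotomy s 0 with h | h | h
        · rw [Real.sign_of_neg h]; simp
        · subst h; simp
        · rw [Real.sign_of_pos h]; simp
      have h3 := mul_le_mul_of_nonneg_right
        (mul_le_mul_of_nonneg_left this (abs_nonneg p))
        (Real.rpow_nonneg (abs_nonneg s) (p - 1))
      simpa using h3
    · have hc : ContinuousAt (fun s : ℝ => |p| * |s| ^ (p-1)) 0 :=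
        continuousAt_const.mul (continuous_abs.continuousAt.rpow_const (Or.inr (by linarith)))
      simpa [Real.zero_rpow (show p - 1 ≠ 0 by linarith)] using hc.tendsto
  · have h2 : (fun s : ℝ => p * Real.sign s * |s| ^ (p-1)) =ᶠ[𝓝 t]
        fun s : ℝ => p * 1 * |s| ^ (p-1) := by
      filter_upwards [eventually_gt_nhds ht] with s hs
      rw [Real.sign_of_pos hs]
    refine ContinuousAt.congr ?_ h2.symm
    exact (continuousAt_const.mul continuousAt_const).mul
      (continuous_abs.continuousAt.rpow_const (Or.inr (by linarith)))

lemma aux_contDiff {p : ℝ} (hp : 1 < p) : ContDiff ℝ 1 (fun s : ℝ => |s| ^ p) := by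
  rw [contDiff_one_iff_deriv]
  constructor
  · exact fun t => (aux_hasDerivAt hp t).differentiableAt
  · have : deriv (fun s : ℝ => |s| ^ p) = fun t => p * Real.sign t * |t| ^ (p-1) :=
      funext fun t => (aux_hasDerivAt hp t).deriv
    rw [this]
    exact aux_cont hp

lemma aux_hom {p : ℝ} (hp : 1 < p) {N : ℕ} (c : ℝ) (hc : 0 ≤ c) (z : Fin N → ℝ) :
    (∑ i, |c * z i| ^ p) ^ (1/p) = c * (∑ i, |z i| ^ p) ^ (1/p) := by
  have hp0 : p ≠ 0 := by linarith
  have h1 : ∀ i, |c * z i| ^ p = c ^ p * |z i| ^ p := fun i => by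
    rw [abs_mul, Real.mul_rpow (abs_nonneg c) (abs_nonneg _), abs_of_nonneg hc]
  rw [Finset.sum_congr rfl fun i _ => h1 i, ← Finset.mul_sum,
    Real.mul_rpow (Real.rpow_nonneg hc p)
      (Finset.sum_nonneg fun i _ => Real.rpow_nonneg (abs_nonneg _) p),
    ← Real.rpow_mul hc, mul_one_div_cancel hp0, Real.rpow_one]

lemma aux_hasFDerivAt {p : ℝ} (hp : 1 < p) {N : ℕ} (u : Fin N → ℝ)
    (hu : ∑ i, |u i| ^ p = 1) :
    HasFDerivAt (fun z : Fin N → ℝ => (∑ i, |z i| ^ p) ^ (1/p))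
      (∑ i, (Real.sign (u i) * |u i| ^ (p-1)) •
        (ContinuousLinearMap.proj i : (Fin N → ℝ) →L[ℝ] ℝ)) u := by
  have hp0 : p ≠ 0 := by linarith
  have hS : HasFDerivAt (fun z : Fin N → ℝ => ∑ i, |z i| ^ p)
      (∑ i, (p * Real.sign (u i) * |u i| ^ (p-1)) •
        (ContinuousLinearMap.proj i : (Fin N → ℝ) →L[ℝ] ℝ)) u :=
    by
    have hSi : ∀ i : Fin N, HasFDerivAt (fun z : Fin N → ℝ => |z i| ^ p)
        ((p * Real.sign (u i) * |u i| ^ (p-1)) •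
          (ContinuousLinearMap.proj i : (Fin N → ℝ) →L[ℝ] ℝ)) u := by
      intro i
      have hproj : HasFDerivAt (fun z : Fin N → ℝ => z i)
          (ContinuousLinearMap.proj i : (Fin N → ℝ) →L[ℝ] ℝ) u :=
        (ContinuousLinearMap.proj i : (Fin N → ℝ) →L[ℝ] ℝ).hasFDerivAt
      exact (aux_hasDerivAt hp (u i)).comp_hasFDerivAt u hproj
    exact HasFDerivAt.fun_sum fun i _ => hSi i
  have hr : HasDerivAt (fun s : ℝ => s ^ (1/p)) (1/p * (1:ℝ) ^ (1/p - 1))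
      (∑ i, |u i| ^ p) := by
    rw [hu]; exact Real.hasDerivAt_rpow_const (Or.inl one_ne_zero)
  have := hr.comp_hasFDerivAt u hS
  refine this.congr_fderiv ?_
  ext x
  simp only [ContinuousLinearMap.sum_apply, ContinuousLinearMap.smul_apply,
    ContinuousLinearMap.proj_apply, smul_eq_mul, Real.one_rpow, Finset.mul_sum]
  refine Finset.sum_congr rfl fun i _ => ?_
  field_simp

lemma aux_hasStrictFDerivAt {p : ℝ} (hp : 1 < p) {N : ℕ} (u : Fin N → ℝ)
    (hu : ∑ i, |u i| ^ p = 1) :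
    HasStrictFDerivAt (fun z : Fin N → ℝ => (∑ i, |z i| ^ p) ^ (1/p))
      (∑ i, (Real.sign (u i) * |u i| ^ (p-1)) •
        (ContinuousLinearMap.proj i : (Fin N → ℝ) →L[ℝ] ℝ)) u := by
  have hScd : ContDiff ℝ 1 (fun z : Fin N → ℝ => ∑ i, |z i| ^ p) :=
    ContDiff.sum fun i _ =>
      (aux_contDiff hp).comp (ContinuousLinearMap.proj (R := ℝ) (φ := fun _ : Fin N => ℝ) i).contDiff
  have hcd : ContDiffAt ℝ 1 (fun z : Fin N → ℝ => (∑ i, |z i| ^ p) ^ (1/p)) u := by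
    have hrp : ContDiffAt ℝ 1 (fun s : ℝ => s ^ (1/p)) (∑ i, |u i| ^ p) := by
      rw [hu]; exact Real.contDiffAt_rpow_const_of_ne one_ne_zero
    exact ContDiffAt.comp u hrp hScd.contDiffAt
  have h := hcd.hasStrictFDerivAt one_ne_zero
  rwa [(aux_hasFDerivAt hp u hu).fderiv] at h

/-- Lemma 4.2 of the paper, for `ℓᵖ(𝒩, ℝ)`, `1 < p < ∞`. -/
theorem lp_horofunction_subsequence (p q : ℝ) (hp : 1 < p) (hpq : 1/p + 1/q = 1)
    (N : ℕ) (hN : 1 ≤ N) (y : ℕ → Fin N → ℝ)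
    (hy : Tendsto (fun n => (∑ i, |y n i| ^ p) ^ (1/p)) atTop atTop) :
    ∃ μ : Fin N → ℝ, (∑ i, |μ i| ^ q) ^ (1/q) = 1 ∧
    ∃ φ : ℕ → ℕ, StrictMono φ ∧
      ∀ x : Fin N → ℝ,
        Tendsto (fun k =>
            (∑ i, |x i - y (φ k) i| ^ p) ^ (1/p) - (∑ i, |y (φ k) i| ^ p) ^ (1/p))
          atTop (𝓝 (-∑ i, μ i * x i)) := by
  have hp0 : (0:ℝ) < p := by linarith
  have hpne : p ≠ 0 := ne_of_gt hp0
  -- q facts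
  have h1q : 1/q = 1 - 1/p := by linarith
  have hq_pos : 0 < 1/q := by
    rw [h1q]
    have : 1/p < 1 := by rw [div_lt_one hp0]; linarith
    linarith
  have hq0 : 0 < q := by
    rcases lt_trichotomy q 0 with h | h | h
    · have : 1/q < 0 := div_neg_of_pos_of_neg one_pos h
      linarith
    · rw [h] at hq_pos; simp at hq_pos
    · exact h
  have hqne : q ≠ 0 := ne_of_gt hq0
  have hqp : (p - 1) * q = p := by
    have h := h1q
    field_simp at h
    nlinarith [h]
  set F : (Fin N → ℝ) → ℝ := fun z => (∑ i, |z i| ^ p) ^ (1/p) with hFdef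
  -- S properties
  have hS_nonneg : ∀ z : Fin N → ℝ, 0 ≤ ∑ i, |z i| ^ p :=
    fun z => Finset.sum_nonneg fun i _ => Real.rpow_nonneg (abs_nonneg _) _
  have hSF : ∀ z : Fin N → ℝ, ∑ i, |z i| ^ p = (F z) ^ p := by
    intro z
    show ∑ i, |z i| ^ p = ((∑ i, |z i| ^ p) ^ (1/p)) ^ p
    rw [← Real.rpow_mul (hS_nonneg z), one_div_mul_cancel hpne, Real.rpow_one]
  -- continuity of F
  have hFc : Continuous F := by
    apply Continuous.rpow_const
    · exact continuous_finset_sum _ fun i _ =>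
        (continuous_abs.comp (continuous_apply i)).rpow_const fun z => Or.inr (le_of_lt hp0)
    · exact fun z => Or.inr (le_of_lt (by positivity))
  -- the compact sphere
  set K : Set (Fin N → ℝ) := {v | F v = 1} with hKdef
  have hKc : IsCompact K := by
    apply Metric.isCompact_of_isClosed_isBounded
    · exact isClosed_eq hFc continuous_const
    · apply (Metric.isBounded_closedBall (x := (0 : Fin N → ℝ)) (r := 1)).subset
      intro v hv
      rw [Metric.mem_closedBall, dist_zero_right]
      rw [pi_norm_le_iff_of_nonneg zero_le_one]
      intro i
      have hsum : ∑ j, |v j| ^ p = 1 := by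
        have : F v = 1 := hv
        rw [hSF v, this, Real.one_rpow]
      have h1 : |v i| ^ p ≤ 1 := by
        rw [← hsum]
        exact Finset.single_le_sum (fun j _ => Real.rpow_nonneg (abs_nonneg _) _)
          (Finset.mem_univ i)
      rw [Real.norm_eq_abs]
      by_contra h
      push_neg at h
      have : 1 < |v i| ^ p :=
        (Real.one_lt_rpow_iff_of_pos (by linarith)).2 (Or.inl ⟨h, hp0⟩)
      linarith
  
  set r : ℕ → ℝ := fun n => (∑ i, |y n i| ^ p) ^ (1/p) with hrdef
  obtain ⟨n0, hn0⟩ := eventually_atTop.1 (hy.eventually_ge_atTop 1)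
  have hmem : ∀ k : ℕ, (r (n0 + k))⁻¹ • y (n0 + k) ∈ K := by
    intro k
    have h1 : 1 ≤ r (n0 + k) := hn0 _ (Nat.le_add_right _ _)
    have hrpos : 0 < r (n0 + k) := by linarith
    show F ((r (n0 + k))⁻¹ • y (n0 + k)) = 1
    have hh : F ((r (n0 + k))⁻¹ • y (n0 + k)) = (r (n0 + k))⁻¹ * F (y (n0 + k)) :=
      aux_hom hp _ (le_of_lt (inv_pos.2 hrpos)) (y (n0 + k))
    rw [hh]
    exact inv_mul_cancel₀ (ne_of_gt hrpos)
  obtain ⟨u, huK, ψ, hψ, hψc⟩ :=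
    hKc.tendsto_subseq (x := fun k => (r (n0 + k))⁻¹ • y (n0 + k)) hmem
  set φ : ℕ → ℕ := fun k => n0 + ψ k with hφdef
  have hφ : StrictMono φ := fun s t h => Nat.add_lt_add_left (hψ h) n0
  have ha : Tendsto (fun k => (r (φ k))⁻¹ • y (φ k)) atTop (𝓝 u) := hψc
  have hSu : ∑ i, |u i| ^ p = 1 := by
    have hFu : F u = 1 := huK
    rw [hSF u, hFu, Real.one_rpow]
  set μ : Fin N → ℝ := fun i => Real.sign (u i) * |u i| ^ (p-1) with hμdef
  have habsμ : ∀ i, |μ i| = |u i| ^ (p-1) := by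
    intro i
    rcases lt_trichotomy (u i) 0 with h | h | h
    · rw [hμdef]
      simp only [Real.sign_of_neg h]
      rw [abs_mul, abs_neg, abs_one, one_mul,
        abs_of_nonneg (Real.rpow_nonneg (abs_nonneg _) _)]
    · rw [hμdef]; simp [h, Real.zero_rpow (show p - 1 ≠ 0 by linarith)]
    · rw [hμdef]
      simp only [Real.sign_of_pos h]
      rw [abs_mul, abs_one, one_mul,
        abs_of_nonneg (Real.rpow_nonneg (abs_nonneg _) _)]
  have hμnorm : (∑ i, |μ i| ^ q) ^ (1/q) = 1 := by
    have hh : ∀ i : Fin N, |μ i| ^ q = |u i| ^ p := by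
      intro i
      rw [habsμ i, ← Real.rpow_mul (abs_nonneg _), hqp]
    rw [Finset.sum_congr rfl fun i _ => hh i, hSu, Real.one_rpow]
  refine ⟨μ, hμnorm, φ, hφ, ?_⟩
  intro x
  rcases eq_or_ne x 0 with hx | hx
  · subst hx
    have h0 : ∀ k : ℕ, (∑ i, |(0 : Fin N → ℝ) i - y (φ k) i| ^ p) ^ (1/p)
        - (∑ i, |y (φ k) i| ^ p) ^ (1/p) = 0 := by
      intro k; simp
    rw [show -∑ i, μ i * (0 : Fin N → ℝ) i = 0 by simp]
    exact Tendsto.congr (fun k => (h0 k).symm) tendsto_const_nhds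
  · have hrt : Tendsto (fun k => r (φ k)) atTop atTop := hy.comp hφ.tendsto_atTop
    have htk : Tendsto (fun k => (r (φ k))⁻¹) atTop (𝓝 0) := hrt.inv_tendsto_atTop
    set a : ℕ → Fin N → ℝ := fun k => (r (φ k))⁻¹ • y (φ k) with hadef
    set b : ℕ → Fin N → ℝ := fun k => a k - (r (φ k))⁻¹ • x with hbdef
    have hb : Tendsto b atTop (𝓝 u) := by
      have h2 : Tendsto (fun k => (r (φ k))⁻¹ • x) atTop (𝓝 ((0:ℝ) • x)) := htk.smul_const x
      rw [zero_smul] at h2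
      simpa using ha.sub h2
    set L : (Fin N → ℝ) →L[ℝ] ℝ :=
      ∑ i, μ i • (ContinuousLinearMap.proj i : (Fin N → ℝ) →L[ℝ] ℝ) with hLdef
    have hLx : ∀ v : Fin N → ℝ, L v = ∑ i, μ i * v i := by
      intro v
      simp [hLdef]
    have hstrict : HasStrictFDerivAt F L u := by
      have hh := aux_hasStrictFDerivAt hp u hSu
      rw [hFdef, hLdef, hμdef]
      exact hh
    have h1 := hstrict.isLittleO.comp_tendsto (hb.prodMk_nhds ha)
    have hrho : Tendsto (fun k => (F (b k) - F (a k) - L (b k - a k)) / ‖b k - a k‖)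
        atTop (𝓝 0) := by
      have hh := h1.norm_right.tendsto_div_nhds_zero
      simpa [Function.comp] using hh
    have hev : ∀ᶠ k in atTop, 1 ≤ r (φ k) := hrt.eventually_ge_atTop 1
    have hxnorm : ‖x‖ ≠ 0 := norm_ne_zero_iff.2 hx
    have hkey : ∀ᶠ k in atTop,
        ((F (b k) - F (a k) - L (b k - a k)) / ‖b k - a k‖) * ‖x‖ - ∑ i, μ i * x i
        = (∑ i, |x i - y (φ k) i| ^ p) ^ (1/p) - (∑ i, |y (φ k) i| ^ p) ^ (1/p) := by
      filter_upwards [hev] with k hk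
      have hR : 0 < r (φ k) := by linarith
      have hRne : r (φ k) ≠ 0 := ne_of_gt hR
      have hc3 : b k - a k = (-(r (φ k))⁻¹) • x := by
        rw [hbdef]
        simp only [sub_sub_cancel_left, neg_smul]
      have c1 : (∑ i, |x i - y (φ k) i| ^ p) ^ (1/p) = r (φ k) * F (b k) := by
        rw [hFdef]
        rw [← aux_hom hp (r (φ k)) hR.le (b k)]
        congr 1
        refine Finset.sum_congr rfl fun i _ => ?_
        have hh : r (φ k) * b k i = y (φ k) i - x i := by
          rw [hbdef, hadef]
          simp only [Pi.sub_apply, Pi.smul_apply, smul_eq_mul]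
          field_simp
        rw [hh, abs_sub_comm]
      have c2 : (∑ i, |y (φ k) i| ^ p) ^ (1/p) = r (φ k) * F (a k) := by
        rw [hFdef]
        rw [← aux_hom hp (r (φ k)) hR.le (a k)]
        congr 1
        refine Finset.sum_congr rfl fun i _ => ?_
        have hh : r (φ k) * a k i = y (φ k) i := by
          rw [hadef]
          simp only [Pi.smul_apply, smul_eq_mul]
          field_simp
        rw [hh]
      have c4 : ‖b k - a k‖ = (r (φ k))⁻¹ * ‖x‖ := by
        rw [hc3, norm_smul, Real.norm_eq_abs, abs_neg, abs_of_pos (inv_pos.2 hR)]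
      have c5 : L (b k - a k) = -((r (φ k))⁻¹ * L x) := by
        rw [hc3, map_smul, smul_eq_mul]
        ring
      rw [c1, c2, c4, c5, hLx x]
      field_simp
      ring
    have hT : Tendsto (fun k =>
        ((F (b k) - F (a k) - L (b k - a k)) / ‖b k - a k‖) * ‖x‖ - ∑ i, μ i * x i)
        atTop (𝓝 (0 * ‖x‖ - ∑ i, μ i * x i)) := (hrho.mul_const _).sub_const _
    rw [zero_mul, zero_sub] at hT
    exact hT.congr' hkey
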